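/- For a qubit (dim H = 2) quantum statistical model with d-dimensional parameter (1 ≤ d ≤ 3) and SLD quantum Fisher information J_θ > 0, the set of attainable classical Fisher information matrices is exactly {√J_θ · G · √J_θ : G a d×d real positive semidefinite matrix with Tr G ≤ 1}. -/

import Mathlib

open Matrix ComplexOrder

lemma psd_sqrt_spec {𝕜 : Type*} [RCLike 𝕜] {n : Type*} [Fintype n] [DecidableEq n]
    {A : Matrix n n 𝕜} (h : A.PosSemidef) :
    (h.1.eigenvectorUnitary.1 * diagonal (RCLike.ofReal ∘ Real.sqrt ∘ h.1.eigenvalues) *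
      (star h.1.eigenvectorUnitary : Matrix n n 𝕜)) *
    (h.1.eigenvectorUnitary.1 * diagonal (RCLike.ofReal ∘ Real.sqrt ∘ h.1.eigenvalues) *
      (star h.1.eigenvectorUnitary : Matrix n n 𝕜)) = A ∧
    (h.1.eigenvectorUnitary.1 * diagonal (RCLike.ofReal ∘ Real.sqrt ∘ h.1.eigenvalues) *
      (star h.1.eigenvectorUnitary : Matrix n n 𝕜)).IsHermitian := by
  set U : Matrix n n 𝕜 := h.1.eigenvectorUnitary.1 with hU
  have hUU : star U * U = 1 := Matrix.mem_unitaryGroup_iff'.mp h.1.eigenvectorUnitary.2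
  set D : Matrix n n 𝕜 := diagonal (RCLike.ofReal ∘ Real.sqrt ∘ h.1.eigenvalues) with hD
  constructor
  · calc U * D * star U * (U * D * star U) = U * (D * (star U * U) * D) * star U := by
          simp only [Matrix.mul_assoc]
      _ = U * diagonal (RCLike.ofReal ∘ h.1.eigenvalues) * star U := by
          rw [hUU, Matrix.mul_one, hD, diagonal_mul_diagonal]
          congr 3
          funext i
          simp [← RCLike.ofReal_mul, Real.mul_self_sqrt (h.eigenvalues_nonneg i)]
      _ = A := by conv_rhs => rw [h.1.spectral_theorem]
                  rfl
  · unfold Matrix.IsHermitian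
    rw [conjTranspose_mul, conjTranspose_mul, star_eq_conjTranspose, conjTranspose_conjTranspose,
      hD, diagonal_conjTranspose, Matrix.mul_assoc]
    congr 3
    funext i
    simp

lemma psd_exists_sqrt {𝕜 : Type*} [RCLike 𝕜] {n : Type*} [Fintype n] [DecidableEq n]
    {A : Matrix n n 𝕜} (h : A.PosSemidef) : ∃ B : Matrix n n 𝕜, A = Bᴴ * B := by
  obtain ⟨h1, h2⟩ := psd_sqrt_spec h
  exact ⟨_, by rw [h2.eq, h1]⟩

lemma psd_diag_nonneg {n : Type*} [Fintype n] [DecidableEq n] {M : Matrix n n ℂ}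
    (h : M.PosSemidef) (i : n) : 0 ≤ M i i := by
  simpa [dotProduct, mulVec, Pi.single_apply, Finset.sum_ite_eq] using h.dotProduct_mulVec_nonneg (Pi.single i 1)

lemma psd_trace_nonneg {n : Type*} [Fintype n] [DecidableEq n] {M : Matrix n n ℂ}
    (h : M.PosSemidef) : 0 ≤ M.trace := by
  exact Finset.sum_nonneg fun i _ => psd_diag_nonneg h i

lemma psd_trace_eq_zero {n : Type*} [Fintype n] [DecidableEq n] {M : Matrix n n ℂ}
    (h : M.PosSemidef) (h0 : M.trace = 0) : M = 0 := by
  obtain ⟨B, rfl⟩ := psd_exists_sqrt h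
  have hB : ∀ j i, B j i = 0 := by
    have : (Bᴴ * B).trace = ∑ i, ∑ j, (Complex.normSq (B j i) : ℂ) := by
      simp [Matrix.trace, Matrix.diag, Matrix.mul_apply, Matrix.conjTranspose_apply,
        Complex.normSq_eq_conj_mul_self]
    rw [this] at h0
    have h0' : ∑ i, ∑ j, Complex.normSq (B j i) = 0 := by
      have := congrArg Complex.re h0
      simpa using this
    intro j i
    have hle : ∀ i ∈ Finset.univ, (0:ℝ) ≤ ∑ j, Complex.normSq (B j i) :=
      fun i _ => Finset.sum_nonneg fun j _ => Complex.normSq_nonneg _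
    have h1 : ∑ j, Complex.normSq (B j i) = 0 :=
      (Finset.sum_eq_zero_iff_of_nonneg hle).mp h0' i (Finset.mem_univ i)
    have h2 : Complex.normSq (B j i) = 0 :=
      (Finset.sum_eq_zero_iff_of_nonneg (fun j _ => Complex.normSq_nonneg _)).mp h1 j
        (Finset.mem_univ j)
    exact Complex.normSq_eq_zero.mp h2
  ext j i
  simp [Matrix.mul_apply, Matrix.conjTranspose_apply, hB]

lemma psd_trace_real {n : Type*} [Fintype n] [DecidableEq n] {M : Matrix n n ℂ}
    (h : M.PosSemidef) : M.trace = ((M.trace.re : ℝ) : ℂ) := by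
  have := psd_trace_nonneg h
  rw [Complex.le_def] at this
  simp only [Complex.zero_re, Complex.zero_im] at this
  exact (Complex.ext_iff.mpr ⟨rfl, this.2.symm⟩)

lemma psd_trace_re_nonneg {n : Type*} [Fintype n] [DecidableEq n] {M : Matrix n n ℂ}
    (h : M.PosSemidef) : 0 ≤ M.trace.re := by
  have := psd_trace_nonneg h
  rw [Complex.le_def] at this
  simpa using this.1

lemma psd_det_real_nonneg {n : ℕ} {M : Matrix (Fin n) (Fin n) ℂ}
    (h : M.PosSemidef) : M.det = ((M.det.re : ℝ) : ℂ) ∧ 0 ≤ M.det.re := by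
  have hd : M.det = ((∏ i, h.1.eigenvalues i : ℝ) : ℂ) := by
    rw [h.1.det_eq_prod_eigenvalues]; push_cast; rfl
  have hnn : (0:ℝ) ≤ ∏ i, h.1.eigenvalues i :=
    Finset.prod_nonneg fun i _ => h.eigenvalues_nonneg i
  refine ⟨?_, ?_⟩
  · rw [hd, Complex.ofReal_re]
  · rw [hd, Complex.ofReal_re]; exact hnn

/-- Cayley–Hamilton for 2×2 matrices. -/
lemma ch2 (X : Matrix (Fin 2) (Fin 2) ℂ) :
    X * X = X.trace • X - X.det • (1 : Matrix (Fin 2) (Fin 2) ℂ) := by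
  ext i j
  fin_cases i <;> fin_cases j <;>
    simp [Matrix.mul_apply, Fin.sum_univ_two, Matrix.trace_fin_two, Matrix.det_fin_two,
      Matrix.one_apply] <;> ring

noncomputable def ipr (ρ A B : Matrix (Fin 2) (Fin 2) ℂ) : ℝ :=
  (((ρ * (A * B + B * A)).trace) / 2).re

lemma ipr_comm (ρ A B : Matrix (Fin 2) (Fin 2) ℂ) : ipr ρ A B = ipr ρ B A := by
  unfold ipr; rw [add_comm]

lemma ipr_add_right (ρ A B C : Matrix (Fin 2) (Fin 2) ℂ) :
    ipr ρ A (B + C) = ipr ρ A B + ipr ρ A C := by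
  unfold ipr
  have h : ρ * (A * (B + C) + (B + C) * A) = ρ * (A * B + B * A) + ρ * (A * C + C * A) := by
    noncomm_ring
  rw [h, Matrix.trace_add, add_div, Complex.add_re]

lemma ipr_smul_right (ρ A B : Matrix (Fin 2) (Fin 2) ℂ) (t : ℝ) :
    ipr ρ A ((t : ℂ) • B) = t * ipr ρ A B := by
  unfold ipr
  rw [Matrix.mul_smul, Matrix.smul_mul, ← smul_add, Matrix.mul_smul, Matrix.trace_smul]
  simp [Complex.smul_re, smul_eq_mul, mul_div_assoc]

lemma ipr_add_left (ρ A B C : Matrix (Fin 2) (Fin 2) ℂ) :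
    ipr ρ (B + C) A = ipr ρ B A + ipr ρ C A := by
  rw [ipr_comm, ipr_add_right, ipr_comm ρ A B, ipr_comm ρ A C]

lemma ipr_smul_left (ρ A B : Matrix (Fin 2) (Fin 2) ℂ) (t : ℝ) :
    ipr ρ ((t : ℂ) • B) A = t * ipr ρ B A := by
  rw [ipr_comm, ipr_smul_right, ipr_comm]

lemma ipr_zero_right (ρ A : Matrix (Fin 2) (Fin 2) ℂ) : ipr ρ A 0 = 0 := by
  simp [ipr]

lemma ipr_sub_right (ρ A B C : Matrix (Fin 2) (Fin 2) ℂ) :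
    ipr ρ A (B - C) = ipr ρ A B - ipr ρ A C := by
  have h1 : B - C = B + ((-1 : ℝ) : ℂ) • C := by push_cast; simp [sub_eq_add_neg]
  rw [h1, ipr_add_right, ipr_smul_right]; ring

lemma ipr_sum_right {k : Type*} [Fintype k] (ρ A : Matrix (Fin 2) (Fin 2) ℂ)
    (f : k → Matrix (Fin 2) (Fin 2) ℂ) (s : Finset k) :
    ipr ρ A (∑ i ∈ s, f i) = ∑ i ∈ s, ipr ρ A (f i) := by
  classical
  induction s using Finset.induction_on with
  | empty => simp [ipr_zero_right]
  | insert a s ha ih => rw [Finset.sum_insert ha, ipr_add_right, ih, Finset.sum_insert ha]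

lemma ipr_self_eq (ρ A : Matrix (Fin 2) (Fin 2) ℂ) :
    ipr ρ A A = ((ρ * (A * A)).trace).re := by
  unfold ipr
  rw [show A * A + A * A = (2:ℂ) • (A * A) by push_cast; simp [two_smul]]
  rw [Matrix.mul_smul, Matrix.trace_smul]
  simp [Complex.smul_re]

lemma trace_rho_psd_nonneg {ρ M : Matrix (Fin 2) (Fin 2) ℂ} (hρ : ρ.PosSemidef)
    (hM : M.PosSemidef) : 0 ≤ (ρ * M).trace := by
  obtain ⟨B, rfl⟩ := psd_exists_sqrt hM
  rw [show ρ * (Bᴴ * B) = (ρ * Bᴴ) * B by rw [Matrix.mul_assoc], Matrix.trace_mul_comm]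
  exact psd_trace_nonneg (by simpa [Matrix.mul_assoc] using hρ.mul_mul_conjTranspose_same B)

lemma ipr_nonneg {ρ : Matrix (Fin 2) (Fin 2) ℂ} (hρ : ρ.PosSemidef)
    {A : Matrix (Fin 2) (Fin 2) ℂ} (hA : A.IsHermitian) : 0 ≤ ipr ρ A A := by
  rw [ipr_self_eq]
  have h1 : ρ * (A * A) = (ρ * A) * A := by rw [Matrix.mul_assoc]
  rw [h1, Matrix.trace_mul_comm]
  have h2 : A * (ρ * A) = Aᴴ * ρ * A := by rw [hA.eq, Matrix.mul_assoc]
  rw [h2]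
  exact psd_trace_re_nonneg (hρ.conjTranspose_mul_mul_same A)

lemma herm_smul_real {B : Matrix (Fin 2) (Fin 2) ℂ} (hB : B.IsHermitian) (t : ℝ) :
    ((t : ℂ) • B).IsHermitian := by
  unfold Matrix.IsHermitian
  rw [Matrix.conjTranspose_smul, hB.eq]
  congr 1
  simp

lemma ipr_cs {ρ : Matrix (Fin 2) (Fin 2) ℂ} (hρ : ρ.PosSemidef)
    {A B : Matrix (Fin 2) (Fin 2) ℂ} (hA : A.IsHermitian) (hB : B.IsHermitian) :
    (ipr ρ A B) ^ 2 ≤ ipr ρ A A * ipr ρ B B := by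
  have key : ∀ t : ℝ, 0 ≤ ipr ρ B B * (t * t) + (2 * ipr ρ A B) * t + ipr ρ A A := by
    intro t
    have h := ipr_nonneg hρ (hA.add (herm_smul_real hB t))
    have hexp : ipr ρ (A + (t:ℂ) • B) (A + (t:ℂ) • B)
        = ipr ρ B B * (t * t) + (2 * ipr ρ A B) * t + ipr ρ A A := by
      rw [ipr_add_right, ipr_add_left, ipr_add_left, ipr_smul_right, ipr_smul_left,
        ipr_smul_left, ipr_smul_right, ipr_comm ρ B A]
      ring
    rw [hexp] at h; exact h
  have hd := discrim_le_zero key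
  unfold discrim at hd
  nlinarith [hd]

lemma ipr_one_left (ρ B : Matrix (Fin 2) (Fin 2) ℂ) : ipr ρ 1 B = ((ρ * B).trace).re := by
  unfold ipr
  rw [one_mul, mul_one, show B + B = (2:ℂ) • B by simp [two_smul],
    Matrix.mul_smul, Matrix.trace_smul]
  simp [Complex.smul_re]

lemma herm_mul_add_herm {A B : Matrix (Fin 2) (Fin 2) ℂ} (hA : A.IsHermitian)
    (hB : B.IsHermitian) : (A * B + B * A).IsHermitian := by
  unfold Matrix.IsHermitian
  rw [Matrix.conjTranspose_add, Matrix.conjTranspose_mul, Matrix.conjTranspose_mul,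
    hA.eq, hB.eq, add_comm]

lemma trace_rho_mul_herm_real {ρ M : Matrix (Fin 2) (Fin 2) ℂ} (hρ : ρ.IsHermitian)
    (hM : M.IsHermitian) : (ρ * M).trace = (((ρ * M).trace.re : ℝ) : ℂ) := by
  have h : (starRingEnd ℂ) ((ρ * M).trace) = (ρ * M).trace := by
    have h1 : ((ρ * M)ᴴ).trace = star ((ρ * M).trace) := Matrix.trace_conjTranspose _
    rw [Matrix.conjTranspose_mul, hρ.eq, hM.eq, Matrix.trace_mul_comm] at h1
    exact h1.symm
  exact (Complex.conj_eq_iff_re.mp h).symm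

lemma rho_mul_trace_zero {ρ M : Matrix (Fin 2) (Fin 2) ℂ} (hρ : ρ.PosDef)
    (hM : M.PosSemidef) (h : (ρ * M).trace = 0) : M = 0 := by
  set T : Matrix (Fin 2) (Fin 2) ℂ := hρ.posSemidef.1.eigenvectorUnitary.1 *
    diagonal (RCLike.ofReal ∘ Real.sqrt ∘ hρ.posSemidef.1.eigenvalues) *
      (star hρ.posSemidef.1.eigenvectorUnitary : Matrix (Fin 2) (Fin 2) ℂ) with hT
  have hTT : T * T = ρ := (psd_sqrt_spec hρ.posSemidef).1
  have hTh : T.IsHermitian := (psd_sqrt_spec hρ.posSemidef).2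
  have hdet : IsUnit T.det := by
    have h1 : T.det * T.det = ρ.det := by rw [← Matrix.det_mul, hTT]
    have h2 : (0:ℂ) < ρ.det := hρ.det_pos
    refine isUnit_iff_ne_zero.mpr fun h0 => ?_
    rw [h0, mul_zero] at h1
    exact (ne_of_gt h2) h1.symm
  have hTMT : (T * M * T).PosSemidef := by
    have := hM.conjTranspose_mul_mul_same T
    rwa [hTh.eq] at this
  have htr : (T * M * T).trace = 0 := by
    rw [Matrix.trace_mul_comm, ← Matrix.mul_assoc, hTT, h]
  have h0 : T * M * T = 0 := psd_trace_eq_zero hTMT htr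
  have heq : T⁻¹ * (T * M * T) * T⁻¹ = M := by
    calc T⁻¹ * (T * M * T) * T⁻¹ = (T⁻¹ * T) * M * (T * T⁻¹) := by
          simp only [Matrix.mul_assoc]
      _ = M := by rw [Matrix.nonsing_inv_mul _ hdet, Matrix.mul_nonsing_inv _ hdet, one_mul, mul_one]
  rw [← heq, h0, mul_zero, zero_mul]

lemma ipr_sum_left {k : Type*} [Fintype k] (ρ A : Matrix (Fin 2) (Fin 2) ℂ)
    (f : k → Matrix (Fin 2) (Fin 2) ℂ) (s : Finset k) :
    ipr ρ (∑ i ∈ s, f i) A = ∑ i ∈ s, ipr ρ (f i) A := by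
  rw [ipr_comm, ipr_sum_right]
  exact Finset.sum_congr rfl fun i _ => ipr_comm ρ A (f i)

lemma ipr_sub_left (ρ A B C : Matrix (Fin 2) (Fin 2) ℂ) :
    ipr ρ (B - C) A = ipr ρ B A - ipr ρ C A := by
  rw [ipr_comm, ipr_sub_right, ipr_comm ρ A B, ipr_comm ρ A C]

lemma psd_smul_nonneg {M : Matrix (Fin 2) (Fin 2) ℂ} (hM : M.PosSemidef) {c : ℝ}
    (hc : 0 ≤ c) : (((c : ℝ) : ℂ) • M).PosSemidef := by
  refine Matrix.PosSemidef.of_dotProduct_mulVec_nonneg ?_ ?_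
  · exact herm_smul_real hM.1 c
  · intro x
    rw [Matrix.smul_mulVec, dotProduct_smul]
    have h1 : (0:ℂ) ≤ ((c:ℝ):ℂ) := by
      rw [Complex.le_def]
      constructor
      · simpa using hc
      · simp
    simpa [smul_eq_mul] using mul_nonneg h1 (hM.dotProduct_mulVec_nonneg x)

open scoped Classical in
noncomputable def msqrt {d : ℕ} (A : Matrix (Fin d) (Fin d) ℝ) : Matrix (Fin d) (Fin d) ℝ :=
  if h : A.PosSemidef then
    h.1.eigenvectorUnitary.1 * diagonal ((↑) ∘ (√·) ∘ h.1.eigenvalues) *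
      (star h.1.eigenvectorUnitary : Matrix (Fin d) (Fin d) ℝ)
  else 0

set_option maxHeartbeats 1000000 in
/-- For a qubit (`dim H = 2`) quantum statistical model with `d`-dimensional parameter
(`1 ≤ d ≤ 3`), SLDs `L_i` (selfadjoint, with `⟨L_i, I⟩_θ = 0`) and positive definite SLD
Fisher information matrix `J = [⟨L_i,L_j⟩_θ]`, the set of attainable classical Fisher
information matrices `g(M)_{ij} = Σ_n ⟨L_i,M_n⟩⟨L_j,M_n⟩/⟨I,M_n⟩` over all POVMs `M` equals
`{√J G √J : G real positive semidefinite, Tr G ≤ 1}`. -/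
theorem stmt13 {d : ℕ} (hd1 : 1 ≤ d) (hd3 : d ≤ 3)
    (ρ : Matrix (Fin 2) (Fin 2) ℂ) (hρ : ρ.PosDef) (hρ1 : ρ.trace = 1)
    (inn : Matrix (Fin 2) (Fin 2) ℂ → Matrix (Fin 2) (Fin 2) ℂ → ℂ)
    (hinn : ∀ A B, inn A B = (1 / 2 : ℂ) * (ρ * (Aᴴ * B + B * Aᴴ)).trace)
    (L : Fin d → Matrix (Fin 2) (Fin 2) ℂ) (hLh : ∀ i, (L i).IsHermitian)
    (horthI : ∀ i, inn (L i) 1 = 0)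
    (J : Matrix (Fin d) (Fin d) ℝ)
    (hJdef : ∀ i j, (J i j : ℂ) = inn (L i) (L j)) (hJ : J.PosDef) :
    {A : Matrix (Fin d) (Fin d) ℝ | ∃ (s : ℕ) (M : Fin s → Matrix (Fin 2) (Fin 2) ℂ),
        (∀ n, (M n).PosSemidef) ∧ (∑ n, M n = 1) ∧
        ∀ i j, (A i j : ℂ) = ∑ n, inn (L i) (M n) * inn (L j) (M n) / inn 1 (M n)} =
      {B : Matrix (Fin d) (Fin d) ℝ | ∃ G : Matrix (Fin d) (Fin d) ℝ,
        G.PosSemidef ∧ G.trace ≤ 1 ∧ B = msqrt J * G * msqrt J} := by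
  classical
  have hρh : ρ.IsHermitian := hρ.1
  have hρps : ρ.PosSemidef := hρ.posSemidef
  have hJps : J.PosSemidef := hJ.posSemidef
  set S : Matrix (Fin d) (Fin d) ℝ := msqrt J with hSdef
  have hSeq : S = hJps.1.eigenvectorUnitary.1 *
      diagonal (RCLike.ofReal ∘ Real.sqrt ∘ hJps.1.eigenvalues) *
        (star hJps.1.eigenvectorUnitary : Matrix (Fin d) (Fin d) ℝ) := by
    rw [hSdef, msqrt, dif_pos hJps]; rfl
  have hSS : S * S = J := by rw [hSeq]; exact (psd_sqrt_spec hJps).1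
  have hSh : S.IsHermitian := by rw [hSeq]; exact (psd_sqrt_spec hJps).2
  have hdetS : IsUnit S.det := by
    have h1 : S.det * S.det = J.det := by rw [← Matrix.det_mul, hSS]
    have h2 : 0 < J.det := hJ.det_pos
    refine isUnit_iff_ne_zero.mpr fun h0 => ?_
    rw [h0, mul_zero] at h1
    rw [← h1] at h2
    exact lt_irrefl _ h2
  have hSinv : S⁻¹ * S = 1 := Matrix.nonsing_inv_mul S hdetS
  have hSinv' : S * S⁻¹ = 1 := Matrix.mul_nonsing_inv S hdetS
  have hJinv : S⁻¹ * S⁻¹ = J⁻¹ := by rw [← hSS, Matrix.mul_inv_rev]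
  have hJdetu : IsUnit J.det := isUnit_iff_ne_zero.mpr (ne_of_gt hJ.det_pos)
  have hJJinv : J * J⁻¹ = 1 := Matrix.mul_nonsing_inv J hJdetu
  have hSinvh : (S⁻¹)ᴴ = S⁻¹ := by rw [Matrix.conjTranspose_nonsing_inv, hSh.eq]
  have hSt : Sᵀ = S := by
    ext i j
    conv_rhs => rw [← hSh.eq]
    simp [Matrix.conjTranspose_apply, Matrix.transpose_apply]
  -- inn in terms of ipr
  have hinn_ipr : ∀ A B : Matrix (Fin 2) (Fin 2) ℂ, A.IsHermitian → B.IsHermitian →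
      inn A B = ((ipr ρ A B : ℝ) : ℂ) := by
    intro A B hA hB
    rw [hinn, hA.eq]
    have hr := trace_rho_mul_herm_real hρh (herm_mul_add_herm hA hB)
    unfold ipr
    rw [hr]
    rw [show ((((ρ * (A * B + B * A)).trace.re : ℝ)) : ℂ) / 2
        = (((ρ * (A * B + B * A)).trace.re / 2 : ℝ) : ℂ) from by push_cast; ring]
    rw [Complex.ofReal_re]
    push_cast
    ring
  have hiprLL : ∀ i j, ipr ρ (L i) (L j) = J i j := by
    intro i j
    have := (hJdef i j).trans (hinn_ipr _ _ (hLh i) (hLh j))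
    exact_mod_cast this.symm
  have hiprL1 : ∀ i, ipr ρ (L i) 1 = 0 := by
    intro i
    have := (horthI i).symm.trans (hinn_ipr _ _ (hLh i) Matrix.isHermitian_one)
    exact_mod_cast this.symm
  have hipr11 : ipr ρ 1 1 = 1 := by
    rw [ipr_one_left, mul_one, hρ1]
    norm_num
  ext A
  simp only [Set.mem_setOf_eq]
  constructor
  · rintro ⟨s, M, hpsd, hsum, hA⟩
    have hMh : ∀ n, (M n).IsHermitian := fun n => (hpsd n).1
    set p : Fin s → ℝ := fun n => ((ρ * M n).trace).re with hpdef
    set w : Fin s → Fin d → ℝ := fun n i => ipr ρ (L i) (M n) with hwdef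
    set τ : Fin s → ℝ := fun n => ((M n).trace).re with hτdef
    have hτreal : ∀ n, (M n).trace = ((τ n : ℝ) : ℂ) := fun n => psd_trace_real (hpsd n)
    have hpreal : ∀ n, (ρ * M n).trace = ((p n : ℝ) : ℂ) :=
      fun n => trace_rho_mul_herm_real hρh (hMh n)
    have hinn1 : ∀ n, inn 1 (M n) = ((p n : ℝ) : ℂ) := by
      intro n
      rw [hinn_ipr 1 (M n) Matrix.isHermitian_one (hMh n), ipr_one_left]
    have hinnL : ∀ i n, inn (L i) (M n) = ((w n i : ℝ) : ℂ) :=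
      fun i n => hinn_ipr _ _ (hLh i) (hMh n)
    have hAeq : ∀ i j, A i j = ∑ n, w n i * w n j / p n := by
      intro i j
      have hc : (A i j : ℂ) = ((∑ n, w n i * w n j / p n : ℝ) : ℂ) := by
        rw [hA i j]
        push_cast
        exact Finset.sum_congr rfl fun n _ => by rw [hinnL i n, hinnL j n, hinn1 n]
      exact_mod_cast hc
    have hpnn : ∀ n, 0 ≤ p n := by
      intro n
      have h := trace_rho_psd_nonneg hρps (hpsd n)
      rw [Complex.le_def] at h
      exact h.1
    have hMzero : ∀ n, p n = 0 → M n = 0 := by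
      intro n h0
      apply rho_mul_trace_zero hρ (hpsd n)
      rw [hpreal n, h0]
      simp
    have hJsymm : ∀ i j, J i j = J j i := by
      intro i j
      conv_lhs => rw [← hJ.1]
      simp [Matrix.conjTranspose_apply]
    have key : ∀ n, (w n ⬝ᵥ (J⁻¹ *ᵥ w n)) / p n ≤ τ n - p n := by
      intro n
      by_cases hp0 : p n = 0
      · have hM0 : M n = 0 := hMzero n hp0
        have hw0 : w n = fun _ => (0:ℝ) := by
          funext i
          simp [hwdef, hM0, ipr_zero_right]
        rw [hw0, hp0]
        have hτ0 : τ n = 0 := by simp [hτdef, hM0]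
        rw [hτ0]
        simp [dotProduct]
      · have hppos : 0 < p n := lt_of_le_of_ne (hpnn n) (Ne.symm hp0)
        set c : Fin d → ℝ := J⁻¹ *ᵥ w n with hcdef
        set Q : ℝ := w n ⬝ᵥ (J⁻¹ *ᵥ w n) with hQdef
        have hQc : Q = w n ⬝ᵥ c := by rw [hQdef, hcdef]
        set X : Matrix (Fin 2) (Fin 2) ℂ := ∑ i, ((c i : ℝ) : ℂ) • L i with hXdef
        have hXh : X.IsHermitian := by
          rw [hXdef]
          unfold Matrix.IsHermitian
          rw [Matrix.conjTranspose_sum]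
          exact Finset.sum_congr rfl fun i _ => herm_smul_real (hLh i) (c i)
        have hiprXA : ∀ B, ipr ρ X B = ∑ i, c i * ipr ρ (L i) B := by
          intro B
          rw [hXdef, ipr_sum_left]
          exact Finset.sum_congr rfl fun i _ => ipr_smul_left ρ B (L i) (c i)
        have hXM : ipr ρ X (M n) = Q := by
          rw [hiprXA, hQc, dotProduct_comm]
          rfl
        have hJc : J *ᵥ c = w n := by
          rw [hcdef, Matrix.mulVec_mulVec, hJJinv, Matrix.one_mulVec]
        have hXX : ipr ρ X X = Q := by
          rw [hiprXA]
          have h1 : ∀ i, ipr ρ (L i) X = (J *ᵥ c) i := by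
            intro i
            rw [ipr_comm, hiprXA]
            simp only [Matrix.mulVec, dotProduct]
            exact Finset.sum_congr rfl fun j _ => by rw [hiprLL j i, hJsymm i j]; ring
          calc ∑ i, c i * ipr ρ (L i) X = ∑ i, c i * (J *ᵥ c) i :=
                Finset.sum_congr rfl fun i _ => by rw [h1]
            _ = c ⬝ᵥ (J *ᵥ c) := rfl
            _ = c ⬝ᵥ w n := by rw [hJc]
            _ = Q := by rw [hQc, dotProduct_comm]
        have hX1 : ipr ρ X 1 = 0 := by
          rw [hiprXA]
          simp [hiprL1]
        set Y : Matrix (Fin 2) (Fin 2) ℂ := M n - ((p n : ℝ) : ℂ) • 1 with hYdef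
        have hYh : Y.IsHermitian := by
          rw [hYdef]
          exact (hMh n).sub (herm_smul_real Matrix.isHermitian_one (p n))
        have hXY : ipr ρ X Y = Q := by
          rw [hYdef, ipr_sub_right, ipr_smul_right, hXM, hX1]
          ring
        have hYY : ipr ρ Y Y = ipr ρ (M n) (M n) - p n ^ 2 := by
          rw [hYdef, ipr_sub_left, ipr_sub_right, ipr_sub_right, ipr_smul_right,
            ipr_smul_left, ipr_smul_right, ipr_one_left, ipr_comm ρ (M n) 1, ipr_one_left,
            ipr_smul_left, hipr11]
          ring
        have hMM : ipr ρ (M n) (M n) ≤ p n * τ n := by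
          rw [ipr_self_eq]
          have hdet := psd_det_real_nonneg (hpsd n)
          have hmm2 : ρ * (M n * M n) = (M n).trace • (ρ * M n) - (M n).det • ρ := by
            rw [ch2, Matrix.mul_sub, Matrix.mul_smul, Matrix.mul_smul, mul_one]
          have htrace : (ρ * (M n * M n)).trace
              = (M n).trace * (ρ * M n).trace - (M n).det * ρ.trace := by
            rw [hmm2, Matrix.trace_sub, Matrix.trace_smul, Matrix.trace_smul]
            simp [smul_eq_mul]
          rw [htrace, hρ1, mul_one, hτreal n, hpreal n, hdet.1]
          rw [show ((τ n : ℝ):ℂ) * ((p n : ℝ):ℂ) - (((M n).det.re : ℝ):ℂ)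
              = ((τ n * p n - (M n).det.re : ℝ) : ℂ) from by push_cast; ring]
          rw [Complex.ofReal_re]
          nlinarith [hdet.2]
        have hQnn : 0 ≤ Q := hXX ▸ ipr_nonneg hρps hXh
        have hYYnn : 0 ≤ ipr ρ Y Y := ipr_nonneg hρps hYh
        have hcs := ipr_cs hρps hXh hYh
        rw [hXY, hXX, hYY] at hcs
        have hRnn : 0 ≤ ipr ρ (M n) (M n) - p n ^ 2 := hYY ▸ hYYnn
        rw [div_le_iff₀ hppos]
        rcases eq_or_lt_of_le hQnn with hQ0 | hQpos
        · rw [← hQ0]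
          nlinarith
        · have hQR : Q ≤ ipr ρ (M n) (M n) - p n ^ 2 := by nlinarith
          nlinarith
    have htr : (J⁻¹ * A).trace = ∑ n, (w n ⬝ᵥ (J⁻¹ *ᵥ w n)) / p n := by
      have h1 : (J⁻¹ * A).trace = ∑ i, ∑ k, J⁻¹ i k * A k i := by
        simp [Matrix.trace, Matrix.diag, Matrix.mul_apply]
      rw [h1]
      calc ∑ i, ∑ k, J⁻¹ i k * A k i
          = ∑ i, ∑ k, ∑ n, J⁻¹ i k * (w n k * w n i / p n) := by
            refine Finset.sum_congr rfl fun i _ => Finset.sum_congr rfl fun k _ => ?_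
            rw [hAeq, Finset.mul_sum]
        _ = ∑ i, ∑ n, ∑ k, J⁻¹ i k * (w n k * w n i / p n) :=
            Finset.sum_congr rfl fun i _ => Finset.sum_comm
        _ = ∑ n, ∑ i, ∑ k, J⁻¹ i k * (w n k * w n i / p n) := Finset.sum_comm
        _ = ∑ n, (w n ⬝ᵥ (J⁻¹ *ᵥ w n)) / p n := by
            refine Finset.sum_congr rfl fun n _ => ?_
            have h2 : (w n ⬝ᵥ (J⁻¹ *ᵥ w n)) / p n
                = ∑ i, ∑ k, w n i * (J⁻¹ i k * w n k) / p n := by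
              simp [dotProduct, Matrix.mulVec, Finset.mul_sum, Finset.sum_div]
            rw [h2]
            exact Finset.sum_congr rfl fun i _ => Finset.sum_congr rfl fun k _ => by ring
    have hτs : ∑ n, τ n = 2 := by
      have h2 : ∑ n, (M n).trace = (2:ℂ) := by
        rw [← Matrix.trace_sum, hsum, Matrix.trace_one]
        norm_num
      have h3 := congrArg Complex.re h2
      rw [Complex.re_sum] at h3
      simpa [hτdef] using h3
    have hps : ∑ n, p n = 1 := by
      have h2 : ∑ n, (ρ * M n).trace = (1:ℂ) := by
        rw [← Matrix.trace_sum, ← Finset.mul_sum, hsum, mul_one, hρ1]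
      have h3 := congrArg Complex.re h2
      rw [Complex.re_sum] at h3
      simpa [hpdef] using h3
    have hbound : (J⁻¹ * A).trace ≤ 1 := by
      rw [htr]
      have h2 : ∑ n, (τ n - p n) = 1 := by
        rw [Finset.sum_sub_distrib, hτs, hps]
        norm_num
      exact h2 ▸ Finset.sum_le_sum fun n _ => key n
    have hApsd : A.PosSemidef := by
      refine Matrix.PosSemidef.of_dotProduct_mulVec_nonneg ?_ ?_
      · ext i j
        rw [Matrix.conjTranspose_apply, star_trivial, hAeq, hAeq]
        exact Finset.sum_congr rfl fun n _ => by ring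
      · intro x
        have hsx : star x = x := funext fun i => star_trivial (x i)
        have hxA : star x ⬝ᵥ (A *ᵥ x) = ∑ n, (x ⬝ᵥ w n) ^ 2 / p n := by
          rw [hsx]
          simp only [dotProduct, Matrix.mulVec]
          calc ∑ i, x i * ∑ j, A i j * x j
              = ∑ i, ∑ j, ∑ n, x i * (w n i * w n j / p n) * x j := by
                refine Finset.sum_congr rfl fun i _ => ?_
                rw [Finset.mul_sum]
                refine Finset.sum_congr rfl fun j _ => ?_
                rw [hAeq, Finset.sum_mul, Finset.mul_sum]
                exact Finset.sum_congr rfl fun n _ => by ring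
            _ = ∑ i, ∑ n, ∑ j, x i * (w n i * w n j / p n) * x j :=
                Finset.sum_congr rfl fun i _ => Finset.sum_comm
            _ = ∑ n, ∑ i, ∑ j, x i * (w n i * w n j / p n) * x j := Finset.sum_comm
            _ = ∑ n, (∑ i, x i * w n i) ^ 2 / p n := by
                refine Finset.sum_congr rfl fun n _ => ?_
                rw [sq, Finset.sum_mul_sum, Finset.sum_div]
                refine Finset.sum_congr rfl fun i _ => ?_
                rw [Finset.sum_div]
                exact Finset.sum_congr rfl fun j _ => by ring
            _ = ∑ n, (x ⬝ᵥ w n) ^ 2 / p n := rfl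
        rw [hxA]
        exact Finset.sum_nonneg fun n _ => div_nonneg (sq_nonneg _) (hpnn n)
    refine ⟨S⁻¹ * A * S⁻¹, ?_, ?_, ?_⟩
    · have h := hApsd.conjTranspose_mul_mul_same (S⁻¹)
      rwa [hSinvh] at h
    · have heq : (S⁻¹ * A * S⁻¹).trace = (J⁻¹ * A).trace := by
        rw [Matrix.trace_mul_comm, ← Matrix.mul_assoc, hJinv]
      rw [heq]
      exact hbound
    · calc A = (S * S⁻¹) * A * (S⁻¹ * S) := by rw [hSinv', hSinv, one_mul, mul_one]
        _ = S * (S⁻¹ * A * S⁻¹) * S := by simp only [Matrix.mul_assoc]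
  · rintro ⟨G, hG, hGtr, rfl⟩
    have hGh : G.IsHermitian := hG.1
    have hJsymm : ∀ i j, J i j = J j i := by
      intro i j
      conv_lhs => rw [← hJ.1]
      simp [Matrix.conjTranspose_apply]
    set U : Matrix (Fin d) (Fin d) ℝ := (hGh.eigenvectorUnitary : Matrix (Fin d) (Fin d) ℝ)
      with hUdef
    set μ : Fin d → ℝ := hGh.eigenvalues with hμdef
    have hspec : G = U * Matrix.diagonal μ * star U := by
      have h := hGh.spectral_theorem
      have h2 : (RCLike.ofReal ∘ hGh.eigenvalues : Fin d → ℝ) = μ := by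
        funext k
        simp [hμdef]
      rw [h2] at h
      exact h
    have hUU : star U * U = 1 := by
      have h := hGh.eigenvectorUnitary.2
      rw [Matrix.mem_unitaryGroup_iff'] at h
      exact h
    have hGab : ∀ a b, G a b = ∑ k, μ k * (U a k * U b k) := by
      intro a b
      rw [hspec, Matrix.mul_apply]
      have h1 : ∀ c, (U * Matrix.diagonal μ) a c = U a c * μ c := fun c => Matrix.mul_diagonal _ _ _ _
      calc ∑ c, (U * Matrix.diagonal μ) a c * (star U) c b
          = ∑ c, (U a c * μ c) * U b c := by
            refine Finset.sum_congr rfl fun c _ => ?_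
            rw [h1, Matrix.star_apply, star_trivial]
        _ = ∑ k, μ k * (U a k * U b k) := Finset.sum_congr rfl fun k _ => by ring
    have hμnn : ∀ k, 0 ≤ μ k := fun k => hG.eigenvalues_nonneg k
    have horth : ∀ k l, (∑ i, U i k * U i l) = if k = l then (1:ℝ) else 0 := by
      intro k l
      have h := congrFun (congrFun hUU k) l
      simpa [Matrix.mul_apply, Matrix.star_apply, Matrix.one_apply] using h
    have hμsum : ∑ k, μ k = G.trace := by
      have h : G.trace = (star U * (U * Matrix.diagonal μ)).trace := by
        conv_lhs => rw [hspec]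
        rw [Matrix.trace_mul_comm]
      rw [h, ← Matrix.mul_assoc, hUU, one_mul, Matrix.trace_diagonal]
    -- vectors
    set v : Fin d → Fin d → ℝ := fun k a => U a k with hvdef
    set u : Fin d → Fin d → ℝ := fun k => S *ᵥ v k with hudef
    set cc : Fin d → Fin d → ℝ := fun k => S⁻¹ *ᵥ v k with hccdef
    have hJcc : ∀ k, J *ᵥ cc k = u k := by
      intro k
      rw [hccdef]
      simp only [Matrix.mulVec_mulVec]
      rw [← hSS, Matrix.mul_assoc, hSinv', mul_one, hudef]
    have hccu : ∀ k, cc k ⬝ᵥ u k = 1 := by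
      intro k
      rw [hudef, hccdef]
      simp only [Matrix.dotProduct_mulVec]
      have h1 : (S⁻¹ *ᵥ v k) ᵥ* S = S *ᵥ (S⁻¹ *ᵥ v k) := by
        rw [show (S⁻¹ *ᵥ v k) ᵥ* S = (S⁻¹ *ᵥ v k) ᵥ* Sᵀ from by rw [hSt],
          Matrix.vecMul_transpose]
      rw [h1, Matrix.mulVec_mulVec, hSinv', Matrix.one_mulVec]
      have := horth k k
      simp only [if_pos rfl] at this
      simpa [dotProduct, hvdef] using this
    -- X operators
    set X : Fin d → Matrix (Fin 2) (Fin 2) ℂ := fun k => ∑ i, ((cc k i : ℝ) : ℂ) • L i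
      with hXdef
    have hXh : ∀ k, (X k).IsHermitian := by
      intro k
      unfold Matrix.IsHermitian
      rw [hXdef]
      rw [Matrix.conjTranspose_sum]
      exact Finset.sum_congr rfl fun i _ => herm_smul_real (hLh i) (cc k i)
    have hiprXA : ∀ k B, ipr ρ (X k) B = ∑ i, cc k i * ipr ρ (L i) B := by
      intro k B
      rw [hXdef, ipr_sum_left]
      exact Finset.sum_congr rfl fun i _ => ipr_smul_left ρ B (L i) (cc k i)
    have hiprLX : ∀ k i, ipr ρ (L i) (X k) = u k i := by
      intro k i
      rw [ipr_comm, hiprXA]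
      have h1 : u k i = ∑ j, cc k j * J j i := by
        rw [← hJcc k]
        simp only [Matrix.mulVec, dotProduct]
        exact Finset.sum_congr rfl fun j _ => by rw [hJsymm i j]; ring
      rw [h1]
      exact Finset.sum_congr rfl fun j _ => by rw [hiprLL j i]
    have hXXipr : ∀ k, ipr ρ (X k) (X k) = 1 := by
      intro k
      rw [hiprXA]
      have h1 : ∀ i, ipr ρ (L i) (X k) = u k i := hiprLX k
      calc ∑ i, cc k i * ipr ρ (L i) (X k) = ∑ i, cc k i * u k i :=
            Finset.sum_congr rfl fun i _ => by rw [h1]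
        _ = cc k ⬝ᵥ u k := rfl
        _ = 1 := hccu k
    have hLtr : ∀ i, (ρ * L i).trace = 0 := by
      intro i
      have h := horthI i
      rw [hinn, (hLh i).eq, mul_one, one_mul] at h
      have h2 : ρ * (L i + L i) = ρ * L i + ρ * L i := mul_add ρ _ _
      rw [h2, Matrix.trace_add] at h
      linear_combination h
    have htrρX : ∀ k, (ρ * X k).trace = 0 := by
      intro k
      rw [hXdef]
      rw [Finset.mul_sum]
      rw [Matrix.trace_sum]
      refine Finset.sum_eq_zero fun i _ => ?_
      rw [Matrix.mul_smul, Matrix.trace_smul, hLtr]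
      simp
    have htrρXX : ∀ k, (ρ * (X k * X k)).trace = 1 := by
      intro k
      have hXXherm : (X k * X k).IsHermitian := by
        unfold Matrix.IsHermitian
        rw [Matrix.conjTranspose_mul, (hXh k).eq]
      have h1 := trace_rho_mul_herm_real hρh hXXherm
      have h2 : ((ρ * (X k * X k)).trace).re = 1 := by
        have := hXXipr k
        rw [ipr_self_eq] at this
        exact this
      rw [h1, h2]
      norm_num
    have hdetX : ∀ k, (X k).det = -1 := by
      intro k
      have h3 : (ρ * (X k * X k)).trace
          = (X k).trace * (ρ * X k).trace - (X k).det * ρ.trace := by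
        rw [ch2, Matrix.mul_sub, Matrix.mul_smul, Matrix.mul_smul, mul_one, Matrix.trace_sub,
          Matrix.trace_smul, Matrix.trace_smul]
        simp [smul_eq_mul]
      rw [htrρXX k, htrρX k, hρ1] at h3
      linear_combination h3
    have hXtr_real : ∀ k, ∃ sr : ℝ, (X k).trace = (sr : ℂ) := by
      intro k
      refine ⟨((X k).trace).re, ?_⟩
      have h : star ((X k).trace) = (X k).trace := by
        rw [← Matrix.trace_conjTranspose, (hXh k).eq]
      exact (Complex.conj_eq_iff_re.mp h).symm
    choose sk hsk using hXtr_real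
    set r : Fin d → ℝ := fun k => Real.sqrt (sk k ^ 2 + 4) with hrdef
    have hr2 : ∀ k, r k ^ 2 = sk k ^ 2 + 4 := by
      intro k
      rw [hrdef]
      exact Real.sq_sqrt (by positivity)
    have hrpos : ∀ k, 0 < r k := by
      intro k
      rw [hrdef]
      positivity
    have hrs1 : ∀ k, sk k < r k := by intro k; nlinarith [hr2 k, hrpos k]
    have hrs2 : ∀ k, -(r k) < sk k := by intro k; nlinarith [hr2 k, hrpos k]
    set t : Fin d → ℝ := fun k => 1 / r k with htdef
    set a : Fin d → ℝ := fun k => (r k - sk k) / (2 * r k) with hadef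
    have ha_pos : ∀ k, 0 < a k := by
      intro k
      have h1 := hrs1 k
      have h2 := hrpos k
      show 0 < (r k - sk k) / (2 * r k)
      exact div_pos (by linarith) (by linarith)
    have ha_lt1 : ∀ k, a k < 1 := by
      intro k
      have h2 := hrpos k
      have h3 := hrs2 k
      show (r k - sk k) / (2 * r k) < 1
      rw [div_lt_one (by linarith)]
      linarith
    have hta : ∀ k, t k ^ 2 = a k * (1 - a k) := by
      intro k
      have hrne : r k ≠ 0 := ne_of_gt (hrpos k)
      show (1 / r k) ^ 2 = (r k - sk k) / (2 * r k) * (1 - (r k - sk k) / (2 * r k))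
      field_simp
      nlinarith [hr2 k]
    set P : Fin d → Matrix (Fin 2) (Fin 2) ℂ :=
      fun k => ((t k : ℝ) : ℂ) • X k + ((a k : ℝ) : ℂ) • 1 with hPdef
    have hPh : ∀ k, (P k).IsHermitian :=
      fun k => (herm_smul_real (hXh k) (t k)).add (herm_smul_real Matrix.isHermitian_one (a k))
    have hXX2 : ∀ k, X k * X k = ((sk k : ℝ) : ℂ) • X k + 1 := by
      intro k
      rw [ch2, hdetX k, hsk k]
      simp
    have hid1 : ∀ k, t k * t k * sk k + (a k * t k + t k * a k) = t k := by
      intro k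
      have hrne : r k ≠ 0 := ne_of_gt (hrpos k)
      show 1 / r k * (1 / r k) * sk k
        + ((r k - sk k) / (2 * r k) * (1 / r k) + 1 / r k * ((r k - sk k) / (2 * r k))) = 1 / r k
      field_simp
      ring
    have hid2 : ∀ k, t k * t k + a k * a k = a k := by
      intro k
      have hrne : r k ≠ 0 := ne_of_gt (hrpos k)
      have h := hta k
      linear_combination h
    have hPP : ∀ k, P k * P k = P k := by
      intro k
      have e1 : ((t k * t k * sk k + (a k * t k + t k * a k) : ℝ) : ℂ) = ((t k : ℝ) : ℂ) := by
        exact_mod_cast congrArg (fun z : ℝ => (z : ℂ)) (hid1 k)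
      have e2 : ((t k * t k + a k * a k : ℝ) : ℂ) = ((a k : ℝ) : ℂ) := by
        exact_mod_cast congrArg (fun z : ℝ => (z : ℂ)) (hid2 k)
      show (((t k : ℝ) : ℂ) • X k + ((a k : ℝ) : ℂ) • 1)
          * (((t k : ℝ) : ℂ) • X k + ((a k : ℝ) : ℂ) • 1)
          = ((t k : ℝ) : ℂ) • X k + ((a k : ℝ) : ℂ) • 1
      have hexp : (((t k : ℝ) : ℂ) • X k + ((a k : ℝ) : ℂ) • 1)
          * (((t k : ℝ) : ℂ) • X k + ((a k : ℝ) : ℂ) • 1)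
          = (((t k : ℝ) : ℂ) * ((t k : ℝ) : ℂ)) • (X k * X k)
            + (((a k : ℝ) : ℂ) * ((t k : ℝ) : ℂ) + ((t k : ℝ) : ℂ) * ((a k : ℝ) : ℂ)) • X k
            + (((a k : ℝ) : ℂ) * ((a k : ℝ) : ℂ)) • 1 := by
        simp only [add_mul, mul_add, Matrix.smul_mul, Matrix.mul_smul, smul_smul,
          one_mul, mul_one, add_smul]
        abel
      rw [hexp, hXX2 k]
      have e1c : ((t k : ℝ) : ℂ) * ((t k : ℝ) : ℂ) * ((sk k : ℝ) : ℂ)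
          + (((a k : ℝ) : ℂ) * ((t k : ℝ) : ℂ) + ((t k : ℝ) : ℂ) * ((a k : ℝ) : ℂ))
          = ((t k : ℝ) : ℂ) := by exact_mod_cast hid1 k
      have e2c : ((t k : ℝ) : ℂ) * ((t k : ℝ) : ℂ) + ((a k : ℝ) : ℂ) * ((a k : ℝ) : ℂ)
          = ((a k : ℝ) : ℂ) := by exact_mod_cast hid2 k
      match_scalars
      · linear_combination e1c
      · linear_combination e2c
    have hQQ : ∀ k, (1 - P k) * (1 - P k) = 1 - P k := by
      intro k
      have h := hPP k
      calc (1 - P k) * (1 - P k) = 1 - P k - P k + P k * P k := by noncomm_ring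
        _ = 1 - P k := by rw [h]; abel
    have hPpsd : ∀ k, (P k).PosSemidef := by
      intro k
      have h1 : (P k)ᴴ * P k = P k := by rw [(hPh k).eq, hPP k]
      rw [← h1]
      exact Matrix.posSemidef_conjTranspose_mul_self _
    have hQh : ∀ k, (1 - P k).IsHermitian := by
      intro k
      unfold Matrix.IsHermitian
      rw [Matrix.conjTranspose_sub, Matrix.conjTranspose_one, (hPh k).eq]
    have hQpsd : ∀ k, (1 - P k).PosSemidef := by
      intro k
      have h1 : (1 - P k)ᴴ * (1 - P k) = 1 - P k := by rw [(hQh k).eq, hQQ k]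
      rw [← h1]
      exact Matrix.posSemidef_conjTranspose_mul_self _
    have hipr1X : ∀ k, ipr ρ 1 (X k) = 0 := by
      intro k
      rw [ipr_one_left, htrρX k]
      simp
    have hiprLP : ∀ k i, ipr ρ (L i) (P k) = t k * u k i := by
      intro k i
      show ipr ρ (L i) (((t k : ℝ) : ℂ) • X k + ((a k : ℝ) : ℂ) • 1) = _
      rw [ipr_add_right, ipr_smul_right, ipr_smul_right, hiprLX k i, hiprL1 i]
      ring
    have hipr1P : ∀ k, ipr ρ 1 (P k) = a k := by
      intro k
      show ipr ρ 1 (((t k : ℝ) : ℂ) • X k + ((a k : ℝ) : ℂ) • 1) = _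
      rw [ipr_add_right, ipr_smul_right, ipr_smul_right, hipr1X k, hipr11]
      ring
    have innLP : ∀ k i, inn (L i) (P k) = ((t k * u k i : ℝ) : ℂ) := by
      intro k i
      rw [hinn_ipr _ _ (hLh i) (hPh k), hiprLP k i]
    have inn1P : ∀ k, inn 1 (P k) = ((a k : ℝ) : ℂ) := by
      intro k
      rw [hinn_ipr _ _ Matrix.isHermitian_one (hPh k), hipr1P k]
    have innLQ : ∀ k i, inn (L i) (1 - P k) = ((-(t k * u k i) : ℝ) : ℂ) := by
      intro k i
      rw [hinn_ipr _ _ (hLh i) (hQh k), ipr_sub_right, hiprL1 i, hiprLP k i]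
      push_cast
      ring
    have inn1Q : ∀ k, inn 1 (1 - P k) = ((1 - a k : ℝ) : ℂ) := by
      intro k
      rw [hinn_ipr _ _ Matrix.isHermitian_one (hQh k), ipr_sub_right, hipr11, hipr1P k]
    have hinn_smul : ∀ (A B : Matrix (Fin 2) (Fin 2) ℂ) (c : ℂ), inn A (c • B) = c * inn A B := by
      intro A B c
      rw [hinn, hinn, Matrix.mul_smul, Matrix.smul_mul, ← smul_add, Matrix.mul_smul,
        Matrix.trace_smul]
      rw [smul_eq_mul]
      ring
    have hSsymm : ∀ i j, S i j = S j i := by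
      intro i j
      conv_lhs => rw [← hSt]
      rfl
    have hslack : 0 ≤ 1 - G.trace := by linarith
    set MM : Fin (d + (d + 1)) → Matrix (Fin 2) (Fin 2) ℂ :=
      Fin.addCases (fun k => ((μ k : ℝ) : ℂ) • P k)
        (Fin.addCases (fun k => ((μ k : ℝ) : ℂ) • (1 - P k))
          (fun _ => ((1 - G.trace : ℝ) : ℂ) • 1)) with hMMdef
    refine ⟨d + (d + 1), MM, ?_, ?_, ?_⟩
    · intro n
      refine Fin.addCases (fun k => ?_) (fun j => ?_) n
      · simp only [hMMdef, Fin.addCases_left]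
        exact psd_smul_nonneg (hPpsd k) (hμnn k)
      · simp only [hMMdef, Fin.addCases_right]
        refine Fin.addCases (fun k2 => ?_) (fun j2 => ?_) j
        · simp only [Fin.addCases_left]
          exact psd_smul_nonneg (hQpsd k2) (hμnn k2)
        · simp only [Fin.addCases_right]
          exact psd_smul_nonneg Matrix.PosSemidef.one hslack
    · rw [Fin.sum_univ_add]
      simp only [hMMdef, Fin.addCases_left, Fin.addCases_right]
      rw [Fin.sum_univ_add]
      simp only [Fin.addCases_left, Fin.addCases_right]
      rw [Fin.sum_univ_one]
      rw [← add_assoc, ← Finset.sum_add_distrib]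
      have h1 : ∀ k : Fin d, ((μ k : ℝ) : ℂ) • P k + ((μ k : ℝ) : ℂ) • (1 - P k)
          = ((μ k : ℝ) : ℂ) • (1 : Matrix (Fin 2) (Fin 2) ℂ) := by
        intro k
        rw [← smul_add]
        congr 1
        abel
      rw [Finset.sum_congr rfl fun k _ => h1 k]
      rw [← Finset.sum_smul]
      have h2 : (∑ k, ((μ k : ℝ) : ℂ)) = ((G.trace : ℝ) : ℂ) := by
        rw [← hμsum]
        push_cast
        rfl
      rw [h2, ← add_smul]
      rw [show ((G.trace : ℝ) : ℂ) + ((1 - G.trace : ℝ) : ℂ) = 1 by push_cast; ring]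
      rw [one_smul]
    · intro i j
      have hreal : ∀ k, μ k * (t k * u k i) * (μ k * (t k * u k j)) / (μ k * a k)
          + μ k * -(t k * u k i) * (μ k * -(t k * u k j)) / (μ k * (1 - a k))
          = μ k * (u k i * u k j) := by
        intro k
        rcases eq_or_lt_of_le (hμnn k) with h0 | hpos
        · rw [← h0]
          simp
        · have hane : a k ≠ 0 := ne_of_gt (ha_pos k)
          have ha1ne : (1 : ℝ) - a k ≠ 0 := ne_of_gt (by linarith [ha_lt1 k])
          have hμne : μ k ≠ 0 := ne_of_gt hpos
          have hμa : μ k * a k ≠ 0 := mul_ne_zero hμne hane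
          have hμ1a : μ k * (1 - a k) ≠ 0 := mul_ne_zero hμne ha1ne
          have hT1 : μ k * (t k * u k i) * (μ k * (t k * u k j)) / (μ k * a k)
              = μ k * ((1 - a k) * (u k i * u k j)) := by
            rw [div_eq_iff hμa]
            linear_combination (μ k ^ 2 * u k i * u k j) * hta k
          have hT2 : μ k * -(t k * u k i) * (μ k * -(t k * u k j)) / (μ k * (1 - a k))
              = μ k * (a k * (u k i * u k j)) := by
            rw [div_eq_iff hμ1a]
            linear_combination (μ k ^ 2 * u k i * u k j) * hta k
          rw [hT1, hT2]
          ring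
      have hblock : ∀ k,
          inn (L i) (((μ k : ℝ) : ℂ) • P k) * inn (L j) (((μ k : ℝ) : ℂ) • P k)
            / inn 1 (((μ k : ℝ) : ℂ) • P k)
          + inn (L i) (((μ k : ℝ) : ℂ) • (1 - P k)) * inn (L j) (((μ k : ℝ) : ℂ) • (1 - P k))
            / inn 1 (((μ k : ℝ) : ℂ) • (1 - P k))
          = ((μ k * (u k i * u k j) : ℝ) : ℂ) := by
        intro k
        rw [hinn_smul, hinn_smul, hinn_smul, hinn_smul, hinn_smul, hinn_smul,
          innLP k i, innLP k j, inn1P k, innLQ k i, innLQ k j, inn1Q k]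
        exact_mod_cast hreal k
      have hlast : inn (L i) (((1 - G.trace : ℝ) : ℂ) • 1)
          * inn (L j) (((1 - G.trace : ℝ) : ℂ) • 1) / inn 1 (((1 - G.trace : ℝ) : ℂ) • 1)
          = 0 := by
        rw [hinn_smul, hinn_smul, horthI i]
        simp
      have hSGS : (S * G * S) i j = ∑ k, μ k * (u k i * u k j) := by
        calc (S * G * S) i j = ∑ b, (∑ c, S i c * G c b) * S b j := by
              simp [Matrix.mul_apply]
          _ = ∑ b, ∑ c, ∑ k, μ k * (S i c * U c k * (U b k * S b j)) := by
              refine Finset.sum_congr rfl fun b _ => ?_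
              rw [Finset.sum_mul]
              refine Finset.sum_congr rfl fun c _ => ?_
              rw [hGab c b, Finset.mul_sum, Finset.sum_mul]
              exact Finset.sum_congr rfl fun k _ => by ring
          _ = ∑ b, ∑ k, ∑ c, μ k * (S i c * U c k * (U b k * S b j)) :=
              Finset.sum_congr rfl fun b _ => Finset.sum_comm
          _ = ∑ k, ∑ b, ∑ c, μ k * (S i c * U c k * (U b k * S b j)) := Finset.sum_comm
          _ = ∑ k, μ k * (u k i * u k j) := by
              refine Finset.sum_congr rfl fun k _ => ?_
              have hui : u k i = ∑ c, S i c * U c k := rfl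
              have huj : u k j = ∑ b, U b k * S b j := by
                show (S *ᵥ v k) j = _
                simp only [Matrix.mulVec, dotProduct]
                exact Finset.sum_congr rfl fun b _ => by rw [hSsymm j b, hvdef]; ring
              rw [hui, huj, Finset.sum_mul_sum, Finset.mul_sum]
              rw [Finset.sum_comm]
              refine Finset.sum_congr rfl fun c _ => ?_
              rw [Finset.mul_sum]
      rw [Fin.sum_univ_add]
      simp only [hMMdef, Fin.addCases_left, Fin.addCases_right]
      rw [Fin.sum_univ_add]
      simp only [Fin.addCases_left, Fin.addCases_right]
      rw [Fin.sum_univ_one]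
      rw [← add_assoc, ← Finset.sum_add_distrib]
      rw [Finset.sum_congr rfl fun k _ => hblock k, hlast, add_zero, hSGS]
      push_cast
      rfl
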